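/- Let V be a finite-dimensional real vector space and C ⊆ V a convex set. A nonempty convex set E is an extreme set of C if and only if there is a finite sequence of convex sets F_0, …, F_n such that F_0 = C, F_n = E, and F_{i+1} is an exposed face of F_i for each i ∈ {0, …, n−1}. -/

import Mathlib

open Set

noncomputable section

/-- `F` is an exposed face of `C`: the intersection of `C` with a supporting
hyperplane of `C`, i.e. there are a linear functional `l` and a constant `c` with
`l ≤ c` on `C`, `l` attaining the value `c` somewhere on `C`, and
`F = {x ∈ C | l x = c}`. -/
def IsExposedFace {V : Type*} [AddCommGroup V] [Module ℝ V] (C F : Set V) : Prop :=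
  ∃ (l : V →ₗ[ℝ] ℝ) (c : ℝ), (∀ x ∈ C, l x ≤ c) ∧ (∃ x ∈ C, l x = c) ∧
    F = {x ∈ C | l x = c}

section Aux

variable {V : Type*}

/-- An exposed face is an extreme set. -/
theorem IsExposedFace.isExtreme [AddCommGroup V] [Module ℝ V] {C F : Set V}
    (h : IsExposedFace C F) : IsExtreme ℝ C F := by
  obtain ⟨l, c, hle, -, rfl⟩ := h
  constructor
  · exact fun x hx => hx.1
  · rintro x₁ hx₁ x₂ hx₂ x ⟨hxC, hxc⟩ hseg
    obtain ⟨a, b, ha, hb, hab, rfl⟩ := hseg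
    have h1 : l x₁ ≤ c := hle x₁ hx₁
    have h2 : l x₂ ≤ c := hle x₂ hx₂
    have hval : a * l x₁ + b * l x₂ = c := by
      simpa [map_add, map_smul, smul_eq_mul] using hxc
    have e1 : l x₁ = c := by
      by_contra hne
      have hlt : l x₁ < c := lt_of_le_of_ne h1 hne
      have ha' : a * l x₁ < a * c := (mul_lt_mul_iff_right₀ ha).2 hlt
      have hb' : b * l x₂ ≤ b * c := mul_le_mul_of_nonneg_left h2 hb.le
      have hc : a * c + b * c = c := by rw [← add_mul, hab, one_mul]
      linarith
    have e2 : l x₂ = c := by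
      by_contra hne
      have hlt : l x₂ < c := lt_of_le_of_ne h2 hne
      have hb' : b * l x₂ < b * c := (mul_lt_mul_iff_right₀ hb).2 hlt
      have ha' : a * l x₁ ≤ a * c := mul_le_mul_of_nonneg_left h1 ha.le
      have hc : a * c + b * c = c := by rw [← add_mul, hab, one_mul]
      linarith
    exact ⟨hx₁, e1⟩

/-- A chain of exposed faces gives an extreme set. -/
theorem chain_isExtreme [AddCommGroup V] [Module ℝ V] :
    ∀ (n : ℕ) (F : ℕ → Set V), (∀ i < n, IsExposedFace (F i) (F (i + 1))) →
      IsExtreme ℝ (F 0) (F n)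
  | 0, F, _ => IsExtreme.refl ℝ (F 0)
  | (n + 1), F, h =>
    (chain_isExtreme n F fun i hi => h i (Nat.lt_succ_of_lt hi)).trans
      ((h n (Nat.lt_succ_self n)).isExtreme)

variable [NormedAddCommGroup V] [NormedSpace ℝ V]

/-- Extension property of intrinsic interior points: the segment from `y` through `x`
can be prolonged a bit beyond `x` inside `E`. -/
theorem exists_extension {E : Set V} {x y : V}
    (hx : x ∈ intrinsicInterior ℝ E) (hy : y ∈ E) :
    ∃ ε : ℝ, 0 < ε ∧ x + ε • (x - y) ∈ E := by
  obtain ⟨x', hx', hxx⟩ := mem_intrinsicInterior.1 hx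
  have hxE : x ∈ E := intrinsicInterior_subset hx
  have hxs : x ∈ affineSpan ℝ E := subset_affineSpan ℝ E hxE
  have hys : y ∈ affineSpan ℝ E := subset_affineSpan ℝ E hy
  have hmem : ∀ ε : ℝ, x + ε • (x - y) ∈ affineSpan ℝ E := by
    intro ε
    have := AffineSubspace.smul_vsub_vadd_mem (affineSpan ℝ E) ε hxs hys hxs
    simpa [vsub_eq_sub, vadd_eq_add, add_comm] using this
  set g : ℝ → affineSpan ℝ E := fun ε => ⟨x + ε • (x - y), hmem ε⟩ with hg
  have hgc : Continuous g := by
    apply Continuous.subtype_mk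
    exact continuous_const.add (continuous_id.smul continuous_const)
  have hg0 : g 0 ∈ interior ((↑) ⁻¹' E : Set (affineSpan ℝ E)) := by
    have : g 0 = x' := by
      apply Subtype.ext
      simp [hg, hxx]
    rw [this]; exact hx'
  have hopen : IsOpen (g ⁻¹' interior ((↑) ⁻¹' E : Set (affineSpan ℝ E))) :=
    isOpen_interior.preimage hgc
  obtain ⟨δ, hδ, hball⟩ := Metric.isOpen_iff.1 hopen 0 hg0
  refine ⟨δ / 2, by linarith, ?_⟩
  have : g (δ / 2) ∈ interior ((↑) ⁻¹' E : Set (affineSpan ℝ E)) := by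
    apply hball
    rw [Metric.mem_ball, Real.dist_eq, sub_zero, abs_of_pos (by linarith : (0:ℝ) < δ / 2)]
    linarith
  have hmem2 : g (δ / 2) ∈ ((↑) ⁻¹' E : Set (affineSpan ℝ E)) := interior_subset this
  exact hmem2

variable [FiniteDimensional ℝ V]

/-- Supporting hyperplane at a point that is not in the algebraic relative interior. -/
theorem exists_support {C : Set V} (hC : Convex ℝ C) {x y₀ : V} (hx : x ∈ C)
    (hy₀ : y₀ ∈ C) (h : ∀ ε : ℝ, 0 < ε → x + ε • (x - y₀) ∉ C) :
    ∃ l : V →ₗ[ℝ] ℝ, (∀ y ∈ C, l y ≤ l x) ∧ ∃ y ∈ C, l y < l x := by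
  classical
  set S : Set V := (fun v => v - x) '' C with hS
  have hSc : Convex ℝ S := by
    have : S = (fun z => -x + z) '' C := by
      simp only [hS]; ext v; constructor
      · rintro ⟨w, hw, rfl⟩; exact ⟨w, hw, by abel_nf⟩
      · rintro ⟨w, hw, rfl⟩; exact ⟨w, hw, by abel_nf⟩
    rw [this]; exact hC.translate (-x)
  set W : Submodule ℝ V := Submodule.span ℝ S with hW
  have hSW : S ⊆ (W : Set V) := Submodule.subset_span
  set S' : Set W := (↑) ⁻¹' S with hS'
  have hS'c : Convex ℝ S' := hSc.linear_preimage W.subtype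
  have h0S : (0 : V) ∈ S := ⟨x, hx, sub_self x⟩
  have h0S' : (0 : W) ∈ S' := by simpa [hS'] using h0S
  -- the span of `S'` is everything
  have hspan : Submodule.span ℝ S' = ⊤ := by
    apply Submodule.map_injective_of_injective W.injective_subtype
    rw [Submodule.map_span, Submodule.map_top, Submodule.range_subtype]
    have : W.subtype '' S' = S := by
      ext v; constructor
      · rintro ⟨w, hw, rfl⟩; exact hw
      · intro hv; exact ⟨⟨v, hSW hv⟩, hv, rfl⟩
    rw [this]
  have haff : affineSpan ℝ S' = ⊤ := by
    rw [← AffineSubspace.direction_eq_top_iff_of_nonempty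
      ((affineSpan_nonempty ℝ).2 ⟨0, h0S'⟩)]
    rw [direction_affineSpan]
    rw [eq_top_iff, ← hspan]
    apply Submodule.span_le.2
    intro v hv
    have : v = v -ᵥ (0 : W) := by simp
    rw [this]
    exact vsub_mem_vectorSpan ℝ hv h0S'
  have hint : (interior S').Nonempty := hS'c.interior_nonempty_iff_affineSpan_eq_top.2 haff
  -- 0 is not in the interior of S'
  have h0ni : (0 : W) ∉ interior S' := by
    intro h0
    have hw₀ : x - y₀ ∈ W := by
      have : y₀ - x ∈ S := ⟨y₀, hy₀, rfl⟩
      have : -(y₀ - x) ∈ W := W.neg_mem (hSW this)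
      simpa using this
    set w₀ : W := ⟨x - y₀, hw₀⟩ with hw
    have hm : Continuous fun ε : ℝ => ε • w₀ := continuous_id.smul continuous_const
    have h00 : (fun ε : ℝ => ε • w₀) 0 ∈ interior S' := by simpa using h0
    obtain ⟨δ, hδ, hball⟩ := Metric.isOpen_iff.1 (isOpen_interior.preimage hm) 0 h00
    have hmem : (δ / 2) • w₀ ∈ interior S' := by
      apply hball
      rw [Metric.mem_ball, Real.dist_eq, sub_zero, abs_of_pos (by linarith : (0:ℝ) < δ / 2)]
      linarith
    have hS2 : ((δ / 2) • w₀ : W) ∈ S' := interior_subset hmem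
    obtain ⟨z, hz, hzz⟩ := hS2
    have : z = x + (δ / 2) • (x - y₀) := by
      have : z - x = (δ / 2) • (x - y₀) := hzz
      linear_combination (norm := abel_nf) this
    exact h (δ / 2) (by linarith) (this ▸ hz)
  -- Hahn-Banach separation
  obtain ⟨f, hf⟩ := geometric_hahn_banach_open_point (hS'c.interior) isOpen_interior h0ni
  simp only [map_zero] at hf
  obtain ⟨z₀, hz₀⟩ := hint
  have hz₀f : f z₀ < 0 := hf z₀ hz₀
  -- f ≤ 0 on all of S'
  have hle : ∀ a ∈ S', f a ≤ 0 := by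
    intro a ha
    by_contra hpos
    push_neg at hpos
    have hd : 0 < f a - f z₀ := by linarith
    set t : ℝ := (-f z₀) / (f a - f z₀) with ht
    have ht0 : 0 ≤ t := div_nonneg (by linarith) hd.le
    have ht1 : t < 1 := (div_lt_one hd).2 (by linarith)
    have hcombo : (1 - t) • z₀ + t • a ∈ interior S' :=
      hS'c.combo_interior_self_mem_interior hz₀ ha (by linarith) ht0 (by ring)
    have hval := hf _ hcombo
    rw [map_add, map_smul, map_smul] at hval
    have hmul : t * (f a - f z₀) = -f z₀ := div_mul_cancel₀ _ hd.ne'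
    simp only [smul_eq_mul] at hval
    nlinarith
  -- extend to a linear functional on V
  obtain ⟨q, hq⟩ := Submodule.exists_isCompl W
  set π : V →ₗ[ℝ] W := Submodule.linearProjOfIsCompl W q hq with hπ
  refine ⟨(f : W →L[ℝ] ℝ).toLinearMap.comp π, ?_, ?_⟩
  · intro y hy
    have hyx : y - x ∈ S := ⟨y, hy, rfl⟩
    have : π y - π x = ⟨y - x, hSW hyx⟩ := by
      rw [← map_sub]
      exact Submodule.linearProjOfIsCompl_apply_left hq ⟨y - x, hSW hyx⟩
    have hres : f (π y) - f (π x) = f ⟨y - x, hSW hyx⟩ := by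
      rw [← map_sub, this]
    have : f ⟨y - x, hSW hyx⟩ ≤ 0 := hle _ hyx
    simp only [LinearMap.coe_comp, Function.comp_apply, ContinuousLinearMap.coe_coe]
    linarith
  · have hz₀S : z₀ ∈ S' := interior_subset hz₀
    obtain ⟨y₁, hy₁, hyz⟩ := hz₀S
    refine ⟨y₁, hy₁, ?_⟩
    have hmemW : y₁ - x ∈ W := hSW ⟨y₁, hy₁, rfl⟩
    have hz : (⟨y₁ - x, hmemW⟩ : W) = z₀ := Subtype.ext hyz
    have : π y₁ - π x = z₀ := by
      rw [← map_sub, ← hz]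
      exact Submodule.linearProjOfIsCompl_apply_left hq ⟨y₁ - x, hmemW⟩
    have hres : f (π y₁) - f (π x) = f z₀ := by rw [← map_sub, this]
    simp only [LinearMap.coe_comp, Function.comp_apply, ContinuousLinearMap.coe_coe]
    linarith

/-- Main induction: an extreme set of `C` is reachable by a chain of exposed faces. -/
theorem main_aux (d : ℕ) :
    ∀ C E : Set V, Module.finrank ℝ (vectorSpan ℝ C) ≤ d → Convex ℝ C → Convex ℝ E →
      E.Nonempty → IsExtreme ℝ C E →
      ∃ (n : ℕ) (F : ℕ → Set V), F 0 = C ∧ F n = E ∧ (∀ i ≤ n, Convex ℝ (F i)) ∧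
        ∀ i < n, IsExposedFace (F i) (F (i + 1)) := by
  induction d using Nat.strong_induction_on with
  | _ d ih =>
    intro C E hd hC hE hEne hext
    obtain ⟨x, hx⟩ := hEne.intrinsicInterior hE
    have hxE : x ∈ E := intrinsicInterior_subset hx
    have hxC : x ∈ C := hext.1 hxE
    by_cases hCE : ∀ y ∈ C, ∃ ε : ℝ, 0 < ε ∧ x + ε • (x - y) ∈ C
    · -- then C ⊆ E and the chain is trivial
      have hsub : C ⊆ E := by
        intro y hy
        obtain ⟨ε, hε, hz⟩ := hCE y hy
        have hseg : x ∈ openSegment ℝ y (x + ε • (x - y)) := by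
          refine ⟨ε / (1 + ε), 1 / (1 + ε), by positivity, by positivity,
            by field_simp; ring, ?_⟩
          have h1ε : (1 : ℝ) + ε ≠ 0 := by positivity
          rw [smul_add, smul_smul, smul_sub]
          match_scalars <;> (field_simp; try ring)
        exact hext.2 hy hz hxE hseg
      have hEC : C = E := Subset.antisymm hsub hext.1
      exact ⟨0, fun _ => C, rfl, hEC, fun i _ => hC, fun i hi => absurd hi (Nat.not_lt_zero i)⟩
    · push_neg at hCE
      obtain ⟨y₀, hy₀C, hy₀⟩ := hCE
      have hy₀' : ∀ ε : ℝ, 0 < ε → x + ε • (x - y₀) ∉ C := fun ε hε hmem =>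
        (hy₀ ε hε) hmem
      obtain ⟨l, hlle, y₁, hy₁C, hy₁⟩ := exists_support hC hxC hy₀C hy₀'
      set F : Set V := {y ∈ C | l y = l x} with hF
      have hFC : F ⊆ C := fun y hy => hy.1
      have hxF : x ∈ F := ⟨hxC, rfl⟩
      have hFconv : Convex ℝ F := hC.inter (convex_hyperplane l.isLinear (l x))
      have hEF : E ⊆ F := by
        intro y hy
        obtain ⟨ε, hε, hz⟩ := exists_extension hx hy
        have hzC : x + ε • (x - y) ∈ C := hext.1 hz
        have h1 : l (x + ε • (x - y)) ≤ l x := hlle _ hzC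
        have h2 : l y ≤ l x := hlle y (hext.1 hy)
        have hcalc : l (x + ε • (x - y)) = l x + ε * (l x - l y) := by
          simp [map_add, map_smul, map_sub, smul_eq_mul]; try ring
        rw [hcalc] at h1
        have : l y = l x := by nlinarith
        exact ⟨hext.1 hy, this⟩
      have hEFext : IsExtreme ℝ F E := by
        refine ⟨hEF, ?_⟩
        intro x₁ h₁ x₂ h₂ z hz hseg
        exact hext.2 (hFC h₁) (hFC h₂) hz hseg
      -- the dimension strictly decreases
      have hlF : ∀ w ∈ vectorSpan ℝ F, l w = 0 := by
        intro w hw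
        rw [vectorSpan_def] at hw
        induction hw using Submodule.span_induction with
        | mem w hw =>
          obtain ⟨a, ha, b, hb, rfl⟩ := hw
          simp only [vsub_eq_sub, map_sub, ha.2, hb.2, sub_self]
        | zero => simp
        | add u v _ _ hu hv => simp [map_add, hu, hv]
        | smul c u _ hu => simp [map_smul, hu]
      have hvlt : vectorSpan ℝ F < vectorSpan ℝ C := by
        rw [SetLike.lt_iff_le_and_exists]
        refine ⟨vectorSpan_mono ℝ hFC, y₁ - x, ?_, ?_⟩
        · have := vsub_mem_vectorSpan ℝ hy₁C hxC
          simpa [vsub_eq_sub] using this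
        · intro hmem
          have := hlF _ hmem
          rw [map_sub] at this
          linarith
      have hdlt : Module.finrank ℝ (vectorSpan ℝ F) < d :=
        lt_of_lt_of_le (Submodule.finrank_lt_finrank_of_lt hvlt) hd
      obtain ⟨m, G, hG0, hGm, hGconv, hGexp⟩ :=
        ih _ hdlt F E le_rfl hFconv hE hEne hEFext
      refine ⟨m + 1, fun i => match i with | 0 => C | (j + 1) => G j, rfl, hGm, ?_, ?_⟩
      · rintro (_ | j) hi
        · exact hC
        · exact hGconv j (by omega)
      · rintro (_ | j) hi
        · show IsExposedFace C (G 0)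
          rw [hG0]
          exact ⟨l, l x, hlle, ⟨x, hxC, rfl⟩, rfl⟩
        · exact hGexp j (by omega)

end Aux

/-- In a finite-dimensional real vector space, a nonempty convex set `E` is an
extreme set of a convex set `C` if and only if there is a finite chain of convex sets
`F 0 = C, …, F n = E` in which each set is an exposed face of the previous one. -/
theorem extreme_iff_chain_of_exposed_faces (V : Type*) [AddCommGroup V] [Module ℝ V]
    [FiniteDimensional ℝ V] (C E : Set V) (hC : Convex ℝ C) (hE : Convex ℝ E)
    (hEne : E.Nonempty) :
    IsExtreme ℝ C E ↔
      ∃ (n : ℕ) (F : ℕ → Set V), F 0 = C ∧ F n = E ∧ (∀ i ≤ n, Convex ℝ (F i)) ∧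
        ∀ i < n, IsExposedFace (F i) (F (i + 1)) := by
  constructor
  · intro hext
    letI : NormedAddCommGroup V :=
      NormedAddCommGroup.induced V (Fin (Module.finrank ℝ V) → ℝ)
        (Module.finBasis ℝ V).equivFun (Module.finBasis ℝ V).equivFun.injective
    letI : NormedSpace ℝ V :=
      NormedSpace.induced ℝ V (Fin (Module.finrank ℝ V) → ℝ) (Module.finBasis ℝ V).equivFun
    exact main_aux (Module.finrank ℝ (vectorSpan ℝ C)) C E le_rfl hC hE hEne hext
  · rintro ⟨n, F, h0, hn, hconv, hexp⟩
    have := chain_isExtreme n F hexp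
    rwa [h0, hn] at this
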